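/- Let X be a nonempty compact subset of ℝ, f : X → X a homeomorphism, and B := { inf O(x) : x ∈ X } the extremal basic set. Then for every minimal set M, the intersection B ∩ M consists of exactly one point. -/

import Mathlib

open Set

/-- The full orbit `{fⁿ(x) : n ∈ ℤ}` of a point under a homeomorphism. -/
def orbitZ {X : Type*} [TopologicalSpace X] (f : X ≃ₜ X) (x : X) : Set X :=
  {y | ∃ n : ℤ, (f.toEquiv ^ n) x = y}

/-- `O(A) = ⋃_{n ∈ ℤ} fⁿ(A)`. -/
def orbitSetZ {X : Type*} [TopologicalSpace X] (f : X ≃ₜ X) (A : Set X) : Set X :=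
  ⋃ n : ℤ, (f.toEquiv ^ n) '' A

/-- `O⁺(A) = ⋃_{n ≥ 0} fⁿ(A)`. -/
def orbitSetP {X : Type*} [TopologicalSpace X] (f : X ≃ₜ X) (A : Set X) : Set X :=
  ⋃ n : ℕ, (f.toEquiv ^ (n : ℤ)) '' A

/-- `O⁻(A) = ⋃_{n ≤ 0} fⁿ(A)`. -/
def orbitSetN {X : Type*} [TopologicalSpace X] (f : X ≃ₜ X) (A : Set X) : Set X :=
  ⋃ n : ℕ, (f.toEquiv ^ (-(n : ℤ))) '' A

/-- The ω-limit set of a point. -/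
def omegaSet {X : Type*} [TopologicalSpace X] (f : X ≃ₜ X) (x : X) : Set X :=
  ⋂ n : ℕ, closure {y | ∃ m : ℕ, n ≤ m ∧ (f.toEquiv ^ (m : ℤ)) x = y}

/-- The α-limit set of a point. -/
def alphaSet {X : Type*} [TopologicalSpace X] (f : X ≃ₜ X) (x : X) : Set X :=
  ⋂ n : ℕ, closure {y | ∃ m : ℕ, n ≤ m ∧ (f.toEquiv ^ (-(m : ℤ))) x = y}

/-- A minimal set: nonempty, closed, invariant, and every orbit in it is dense in it. -/
def IsMinimalSet {X : Type*} [TopologicalSpace X] (f : X ≃ₜ X) (M : Set X) : Prop :=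
  M.Nonempty ∧ IsClosed M ∧ f '' M = M ∧ ∀ x ∈ M, M ⊆ closure (orbitZ f x)

/-- `M_f`: the closure of the union of all minimal sets. -/
def minimalUnion {X : Type*} [TopologicalSpace X] (f : X ≃ₜ X) : Set X :=
  closure (⋃₀ {M | IsMinimalSet f M})

/-- A wandering point. -/
def IsWandering {X : Type*} [TopologicalSpace X] (f : X ≃ₜ X) (x : X) : Prop :=
  ∃ U : Set X, IsOpen U ∧ x ∈ U ∧ ∀ n : ℤ, n ≠ 0 → (f.toEquiv ^ n) '' U ∩ U = ∅

/-- `Ω_f`: the set of non-wandering points. -/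
def nonWandering {X : Type*} [TopologicalSpace X] (f : X ≃ₜ X) : Set X :=
  {x | ¬ IsWandering f x}

/-- A quasi-section: a closed set every open neighborhood of which has full orbit. -/
def IsQuasiSection {X : Type*} [TopologicalSpace X] (f : X ≃ₜ X) (A : Set X) : Prop :=
  IsClosed A ∧ ∀ U : Set X, IsOpen U → A ⊆ U → orbitSetZ f U = Set.univ

/-- A minimal quasi-section (minimal w.r.t. inclusion among quasi-sections). -/
def IsMinimalQuasiSection {X : Type*} [TopologicalSpace X] (f : X ≃ₜ X) (A : Set X) : Prop :=
  IsQuasiSection f A ∧ ∀ B : Set X, IsQuasiSection f B → B ⊆ A → B = A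

/-- A basic set: a quasi-section meeting every orbit in at most one point. -/
def IsBasicSet {X : Type*} [TopologicalSpace X] (f : X ≃ₜ X) (A : Set X) : Prop :=
  IsQuasiSection f A ∧ ∀ x : X, (orbitZ f x ∩ A).Subsingleton

/-- A minimal basic set (minimal w.r.t. inclusion among basic sets). -/
def IsMinimalBasicSet {X : Type*} [TopologicalSpace X] (f : X ≃ₜ X) (A : Set X) : Prop :=
  IsBasicSet f A ∧ ∀ B : Set X, IsBasicSet f B → B ⊆ A → B = A

/-- Densely aperiodic: the points with infinite orbit are dense. -/
def DenselyAperiodic {X : Type*} [TopologicalSpace X] (f : X ≃ₜ X) : Prop :=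
  Dense {x : X | (orbitZ f x).Infinite}

section Aux
variable {X : Type*} [TopologicalSpace X]

lemma stmt17_continuous_zpow (f : X ≃ₜ X) (n : ℤ) :
    Continuous ⇑(f.toEquiv ^ n) := by
  have hnat : ∀ (g : X ≃ₜ X) (k : ℕ), Continuous ⇑(g.toEquiv ^ k) := by
    intro g k
    induction k with
    | zero => simpa using continuous_id
    | succ m ih =>
      have : ⇑(g.toEquiv ^ (m + 1)) = ⇑(g.toEquiv ^ m) ∘ ⇑g.toEquiv := by
        ext x; simp [pow_succ, Equiv.Perm.mul_apply]
      rw [this]; exact ih.comp g.continuous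
  obtain ⟨k, rfl | rfl⟩ := n.eq_nat_or_neg
  · simpa using hnat f k
  · have : f.toEquiv ^ (-(k : ℤ)) = f.symm.toEquiv ^ k := by
      rw [zpow_neg, zpow_natCast, ← inv_pow]; rfl
    rw [this]; exact hnat f.symm k

lemma stmt17_orbit_inv (f : X ≃ₜ X) (y z : X)
    (hz : z ∈ orbitZ f y) (n : ℤ) : (f.toEquiv ^ n) z ∈ orbitZ f y := by
  obtain ⟨m, rfl⟩ := hz
  exact ⟨n + m, by rw [zpow_add, Equiv.Perm.mul_apply]⟩

lemma stmt17_set_inv (f : X ≃ₜ X) (M : Set X) (hM : f '' M = M) (n : ℤ) :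
    (f.toEquiv ^ n) '' M = M := by
  have hnat : ∀ (g : X ≃ X), g '' M = M → ∀ k : ℕ, (g ^ k) '' M = M := by
    intro g hg k
    induction k with
    | zero => simp
    | succ m ih =>
      have : ⇑(g ^ (m + 1)) = ⇑(g ^ m) ∘ ⇑g := by
        ext x; simp [pow_succ, Equiv.Perm.mul_apply]
      rw [this, image_comp, hg, ih]
  have hf : f.toEquiv '' M = M := hM
  have hfs : f.toEquiv.symm '' M = M := by
    conv_lhs => rw [← hf]
    exact f.toEquiv.symm_image_image M
  obtain ⟨k, rfl | rfl⟩ := n.eq_nat_or_neg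
  · simpa using hnat f.toEquiv hf k
  · have : f.toEquiv ^ (-(k : ℤ)) = f.toEquiv.symm ^ k := by
      rw [zpow_neg, zpow_natCast, ← inv_pow]; rfl
    rw [this]; exact hnat f.toEquiv.symm hfs k
end Aux

lemma stmt17_sInf_closure (S : Set ℝ) (hne : S.Nonempty) (hbdd : BddBelow S) :
    sInf (closure S) = sInf S := by
  apply le_antisymm
  · exact csInf_le_csInf (by simpa using hbdd) hne subset_closure
  · refine le_csInf (hne.mono subset_closure) ?_
    intro b hb
    have : sInf S ∈ lowerBounds (closure S) := by
      rw [lowerBounds_closure]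
      exact fun x hx => csInf_le hbdd hx
    exact this hb


theorem stmt17 (X : Set ℝ) (hne : X.Nonempty) (hX : IsCompact X)
    (f : X ≃ₜ X)
    (M : Set X) (hM : IsMinimalSet f M) :
    ∃ p : X, {x : X | ∃ y : X, (x : ℝ) = sInf ((↑) '' orbitZ f y)} ∩ M = {p} := by
  haveI : CompactSpace ↥X := isCompact_iff_compactSpace.mp hX
  obtain ⟨hMne, hMcl, hMinv, hMmin⟩ := hM
  have hval : Continuous (Subtype.val : ↥X → ℝ) := continuous_subtype_val
  have hclimg : ∀ S : Set ↥X, Subtype.val '' closure S = closure (Subtype.val '' S) :=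
    fun S => (hX.isClosed.isClosedEmbedding_subtypeVal.closure_image_eq S).symm
  have hsub : ∀ S : Set ↥X, Subtype.val '' S ⊆ X := by
    rintro S _ ⟨x, _, rfl⟩; exact x.2
  have hbdd : ∀ S : Set ↥X, BddBelow (Subtype.val '' S) :=
    fun S => hX.bddBelow.mono (hsub S)
  have horbM : ∀ x ∈ M, orbitZ f x ⊆ M := by
    rintro x hx z ⟨n, rfl⟩
    rw [← stmt17_set_inv f M hMinv n]
    exact mem_image_of_mem _ hx
  have horbne : ∀ y : ↥X, (Subtype.val '' orbitZ f y).Nonempty :=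
    fun y => ⟨y, ⟨y, ⟨0, by simp⟩, rfl⟩⟩
  have hclo : ∀ x ∈ M, closure (orbitZ f x) = M := fun x hx =>
    le_antisymm (closure_minimal (horbM x hx) hMcl) (hMmin x hx)
  have key : ∀ x ∈ M, sInf (Subtype.val '' orbitZ f x) = sInf (Subtype.val '' M) := by
    intro x hx
    have : Subtype.val '' M = closure (Subtype.val '' orbitZ f x) := by
      rw [← hclimg, hclo x hx]
    rw [this, stmt17_sInf_closure _ (horbne x) (hbdd _)]
  -- the minimum of M
  have hMim : IsCompact (Subtype.val '' M) := (hMcl.isCompact.image hval)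
  have hMimne : (Subtype.val '' M).Nonempty := hMne.image _
  have hmem : sInf (Subtype.val '' M) ∈ Subtype.val '' M := hMim.sInf_mem hMimne
  obtain ⟨p, hpM, hpv⟩ := hmem
  refine ⟨p, ?_⟩
  ext x
  simp only [mem_inter_iff, mem_setOf_eq, mem_singleton_iff]
  constructor
  · rintro ⟨⟨y, hxy⟩, hxM⟩
    set S := Subtype.val '' orbitZ f y with hS
    have hclS : closure S ⊆ X := closure_minimal (hsub _) hX.isClosed
    have hScomp : IsCompact (closure S) := hX.of_isClosed_subset isClosed_closure hclS
    have hSne : (closure S).Nonempty := (horbne y).mono subset_closure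
    have hsinf : sInf (closure S) = sInf S := stmt17_sInf_closure S (horbne y) (hbdd _)
    have hmemS : sInf S ∈ closure S := by rw [← hsinf]; exact hScomp.sInf_mem hSne
    have h1 : (x : ℝ) ∈ Subtype.val '' closure (orbitZ f y) := by
      rw [hclimg, hxy]; exact hmemS
    obtain ⟨x', hx'cl, hvx⟩ := h1
    have hxcl : x ∈ closure (orbitZ f y) := by rwa [Subtype.val_injective hvx] at hx'cl
    have horb : orbitZ f x ⊆ closure (orbitZ f y) := by
      rintro z ⟨n, rfl⟩
      have hc := (image_closure_subset_closure_image (stmt17_continuous_zpow f n))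
        (mem_image_of_mem _ hxcl)
      refine closure_mono ?_ hc
      rintro w ⟨u, hu, rfl⟩
      exact stmt17_orbit_inv f y u hu n
    have hMsub : M ⊆ closure (orbitZ f y) :=
      (hMmin x hxM).trans (closure_minimal horb isClosed_closure)
    have h2 : Subtype.val '' M ⊆ closure S := by
      rw [← hclimg]; exact image_mono hMsub
    have hbddcl : BddBelow (closure S) := by rw [← hclimg]; exact hbdd _
    have h3 : sInf (closure S) ≤ sInf (Subtype.val '' M) := csInf_le_csInf hbddcl hMimne h2
    have h4 : sInf (Subtype.val '' M) ≤ (x : ℝ) := csInf_le (hbdd M) (mem_image_of_mem _ hxM)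
    apply Subtype.val_injective
    apply le_antisymm
    · rw [hxy, ← hsinf, hpv]; exact h3
    · rw [hpv]; exact h4
  · rintro rfl
    exact ⟨⟨x, by rw [key x hpM, hpv]⟩, hpM⟩
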